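/- With G_{k,i}(s) defined as the unique solution of x_cλ·G·z_{k,i}(s) + μ·G = x_cλ·s_{k,i-1}·z_{k,i}(s) + μ·s_{k,i+1}, the map G preserves the state space: if s satisfies s_{k,0} = 1 and 1 ≥ s_{k,i} ≥ s_{k,i+1} ≥ 0 for all k, i, then G_{k,i}(s) ≥ G_{k,i+1}(s) for all k ∈ K and i ≥ 1. -/

import Mathlib

open Finset Filter

/-- `zfun K p kbar s k i` is the quantity `z_{k,i+1}(s)` of the graph mean field model:
`(1/2) * Σ_{k'∈K} ((k'+k)/k̄) p(k') (s_{k',i} + s_{k',i+1})`. -/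
noncomputable def zfun (K : Finset ℕ) (p : ℕ → ℝ) (kbar : ℝ) (s : ℕ → ℕ → ℝ) (k i : ℕ) : ℝ :=
  (1/2) * ∑ k' ∈ K, (((k' : ℝ) + (k : ℝ)) / kbar) * p k' * (s k' i + s k' (i+1))

/-- The fixed-point map `G` preserves monotonicity in `i`:
`G_{k,i}(s) ≥ G_{k,i+1}(s)` (stated at level `i+1`, i.e. for all `i ≥ 1`). -/
theorem G_preserves_state_space (K : Finset ℕ) (p : ℕ → ℝ)
    (hp : ∀ k ∈ K, 0 ≤ p k) (hpsum : ∑ k ∈ K, p k = 1)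
    (kbar : ℝ) (hkbar : kbar = ∑ k ∈ K, p k * (k : ℝ)) (hkpos : 0 < kbar)
    (xcl mu : ℝ) (hx : 0 < xcl) (hmu : 0 < mu)
    (s : ℕ → ℕ → ℝ) (hs0 : ∀ k, s k 0 = 1)
    (hmono : ∀ k i, s k (i+1) ≤ s k i) (hnn : ∀ k i, 0 ≤ s k i) (hle1 : ∀ k i, s k i ≤ 1)
    (G : ℕ → ℕ → ℝ)
    (hG : ∀ k ∈ K, ∀ i : ℕ,
      xcl * G k i * zfun K p kbar s k i + mu * G k i
        = xcl * s k i * zfun K p kbar s k i + mu * s k (i+2)) :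
    ∀ k ∈ K, ∀ i : ℕ, G k (i+1) ≤ G k i := by
  intro k hk i
  set zi := zfun K p kbar s k i with hzi
  set z1 := zfun K p kbar s k (i+1) with hz1
  have hz0 : 0 ≤ z1 := by
    rw [hz1, zfun]
    apply mul_nonneg (by norm_num)
    apply Finset.sum_nonneg
    intro k' hk'
    have h1 : (0:ℝ) ≤ ((k' : ℝ) + (k : ℝ)) / kbar :=
      div_nonneg (by positivity) hkpos.le
    exact mul_nonneg (mul_nonneg h1 (hp k' hk'))
      (add_nonneg (hnn k' (i+1)) (hnn k' (i+1+1)))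
  have hzle : z1 ≤ zi := by
    rw [hz1, hzi, zfun, zfun]
    apply mul_le_mul_of_nonneg_left _ (by norm_num)
    apply Finset.sum_le_sum
    intro k' hk'
    have h1 : (0:ℝ) ≤ ((k' : ℝ) + (k : ℝ)) / kbar * p k' :=
      mul_nonneg (div_nonneg (by positivity) hkpos.le) (hp k' hk')
    have := hmono k' i
    have := hmono k' (i+1)
    nlinarith
  have hz0' : 0 ≤ zi := hz0.trans hzle
  have hden1 : 0 < xcl * zi + mu := by nlinarith
  have hden2 : 0 < xcl * z1 + mu := by nlinarith
  have e1 := hG k hk i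
  have e2 := hG k hk (i+1)
  rw [← hzi] at e1
  rw [← hz1] at e2
  have hG1 : G k i = (xcl * s k i * zi + mu * s k (i+2)) / (xcl * zi + mu) := by
    rw [eq_div_iff hden1.ne']; nlinarith [e1]
  have hG2 : G k (i+1) = (xcl * s k (i+1) * z1 + mu * s k (i+3)) / (xcl * z1 + mu) := by
    rw [eq_div_iff hden2.ne']; nlinarith [e2]
  rw [hG1, hG2, div_le_div_iff₀ hden2 hden1]
  have hm0 := hmono k i
  have hm1 := hmono k (i+1)
  have hm2 := hmono k (i+2)
  have key : z1 * (s k (i+1) - s k (i+2)) ≤ zi * (s k i - s k (i+3)) := by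
    apply mul_le_mul hzle (by linarith) (by linarith) hz0'
  nlinarith [mul_nonneg (mul_nonneg hz0 hz0') (sub_nonneg.2 hm0),
    mul_nonneg hmu.le (sub_nonneg.2 hm2), key, mul_pos hx hmu,
    mul_le_mul_of_nonneg_left key (mul_pos hx hmu).le,
    mul_nonneg (mul_nonneg (mul_nonneg hx.le hx.le) (mul_nonneg hz0 hz0')) (sub_nonneg.2 hm0),
    mul_nonneg (mul_nonneg hmu.le hmu.le) (sub_nonneg.2 hm2)]
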